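/- Define f : ℝ² → ℝ by f(x) = |x₁| + |x₂|, F(x) = (x₁, x₂), and for Δ ∈ (0,1) define F̃_Δ(x) = (x₁ + Δ² x₂, x₂ + Δ² x₁) and f̃_Δ(x) = |x₁ + Δ² x₂| + |x₂ + Δ² x₁|. Then: (i) {F̃_Δ : Δ ∈ (0,1)} are fully linear models of F at x̄ = (0,0) with constants κ_F = 1 and κ_G = 1, and F̃_Δ(0,0) = F(0,0); (ii) for any ε > 0 and Δ ∈ (0,1), f̃_Δ is differentiable at (ε, 0) with gradient (1 + Δ², 1 + Δ²); (iii) the convex subdifferential of f at (ε, 0) equals {v : v₁ = 1, v₂ ∈ [−1,1]}, so (1, −1) ∈ ∂f(ε, 0); and (iv) the Euclidean distance from (1, −1) to (1 + Δ², 1 + Δ²) is at least 2 for every Δ ∈ (0,1), and hence does not converge to 0 as Δ → 0. -/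

import Mathlib

open Metric Set Filter

/-- `f(x) = |x₁| + |x₂|`. -/
def f11 (x : EuclideanSpace ℝ (Fin 2)) : ℝ := |x 0| + |x 1|

/-- `F(x) = (x₁, x₂)`, given by components. -/
def F11 (i : Fin 2) (x : EuclideanSpace ℝ (Fin 2)) : ℝ := x i

/-- `F̃_Δ(x) = (x₁ + Δ² x₂, x₂ + Δ² x₁)`, given by components. -/
noncomputable def Ft11 (Δ : ℝ) (i : Fin 2) (x : EuclideanSpace ℝ (Fin 2)) : ℝ :=
  if i = 0 then x 0 + Δ ^ 2 * x 1 else x 1 + Δ ^ 2 * x 0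

/-- `f̃_Δ(x) = |x₁ + Δ² x₂| + |x₂ + Δ² x₁|`. -/
def ft11 (Δ : ℝ) (x : EuclideanSpace ℝ (Fin 2)) : ℝ :=
  |x 0 + Δ ^ 2 * x 1| + |x 1 + Δ ^ 2 * x 0|

/-- The convex subdifferential of a real-valued function `h` at `x̄`:
`{v : h(x) ≥ h(x̄) + ⟨v, x − x̄⟩ for all x}`. -/
def rSubdiff11 (h : EuclideanSpace ℝ (Fin 2) → ℝ) (xbar : EuclideanSpace ℝ (Fin 2)) :
    Set (EuclideanSpace ℝ (Fin 2)) :=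
  {v | ∀ x, h xbar + (inner ℝ v (x - xbar) : ℝ) ≤ h x}

-- Auxiliary material

local notation "E2" => EuclideanSpace ℝ (Fin 2)

lemma esa11 (p : Fin 2 → ℝ) (i : Fin 2) :
    ((EuclideanSpace.equiv (Fin 2) ℝ).symm p) i = p i := rfl

lemma hasGradLin11 (a b : ℝ) (x : E2) :
    HasGradientAt (fun y : E2 => a * y 0 + b * y 1)
      ((EuclideanSpace.equiv (Fin 2) ℝ).symm ![a, b]) x := by
  rw [hasGradientAt_iff_hasFDerivAt]
  have h : (fun y : E2 => a * y 0 + b * y 1)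
      = ⇑(InnerProductSpace.toDual ℝ E2 ((EuclideanSpace.equiv (Fin 2) ℝ).symm ![a, b])) := by
    funext y
    simp [InnerProductSpace.toDual_apply_apply, PiLp.inner_apply, Fin.sum_univ_two, esa11]
    ring
  rw [h]
  exact (InnerProductSpace.toDual ℝ E2 _).hasFDerivAt

lemma contDiffLin11 (a b : ℝ) : ContDiff ℝ 1 (fun y : E2 => a * y 0 + b * y 1) :=
  (contDiff_const.mul (EuclideanSpace.proj (𝕜 := ℝ) (0 : Fin 2)).contDiff).add
    (contDiff_const.mul (EuclideanSpace.proj (𝕜 := ℝ) (1 : Fin 2)).contDiff)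

lemma gradLin11 (a b : ℝ) (x : E2) :
    gradient (fun y : E2 => a * y 0 + b * y 1) x
      = (EuclideanSpace.equiv (Fin 2) ℝ).symm ![a, b] :=
  (hasGradLin11 a b x).gradient

lemma norm_symm11 (a b : ℝ) :
    ‖((EuclideanSpace.equiv (Fin 2) ℝ).symm ![a, b] : E2)‖ = Real.sqrt (a ^ 2 + b ^ 2) := by
  rw [EuclideanSpace.norm_eq]
  simp [Fin.sum_univ_two, esa11, Real.norm_eq_abs, sq_abs]

lemma sub_symm11 (a b c d : ℝ) :
    ((EuclideanSpace.equiv (Fin 2) ℝ).symm ![a, b] : E2)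
      - (EuclideanSpace.equiv (Fin 2) ℝ).symm ![c, d]
      = (EuclideanSpace.equiv (Fin 2) ℝ).symm ![a - c, b - d] := by
  ext i
  fin_cases i <;> simp [esa11]

lemma abs_apply_le_norm11 (y : E2) (i : Fin 2) : |y i| ≤ ‖y‖ := by
  rw [EuclideanSpace.norm_eq, ← Real.sqrt_sq_eq_abs]
  apply Real.sqrt_le_sqrt
  fin_cases i <;>
    simp [Fin.sum_univ_two, Real.norm_eq_abs, sq_abs] <;> positivity

/-- **Example 4.4** (failure of the subdifferential bound away from `x̄`):
(i) the `Ft11 Δ` are fully linear models of `F11` at `x̄ = (0,0)` with constants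
`κF = κG = 1` on `(0,1)`, and `F̃_Δ(0,0) = F(0,0)`; (ii) `f̃_Δ` is differentiable at
`(ε, 0)` with gradient `(1 + Δ², 1 + Δ²)`; (iii) `∂f(ε,0) = {v : v₁ = 1, v₂ ∈ [−1,1]}`,
so `(1,−1) ∈ ∂f(ε,0)`; (iv) the distance from `(1,−1)` to `(1 + Δ², 1 + Δ²)` is at least
`2`, hence does not converge to `0` as `Δ → 0`. -/
theorem example_failure_away_from_center :
    -- (i) fully linear models agreeing with F at the centre
    ((∀ i, ContDiff ℝ 1 (F11 i)) ∧
      (∀ Δ ∈ Ioo (0:ℝ) 1, (∀ i, ContDiff ℝ 1 (Ft11 Δ i)) ∧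
        ∀ i, ∀ y ∈ ball (0 : EuclideanSpace ℝ (Fin 2)) Δ,
          |F11 i y - Ft11 Δ i y| ≤ 1 * Δ ^ 2 ∧
          ‖gradient (F11 i) y - gradient (Ft11 Δ i) y‖ ≤ 1 * Δ) ∧
      ∀ Δ ∈ Ioo (0:ℝ) 1, ∀ i, Ft11 Δ i 0 = F11 i 0) ∧
    -- (ii) f̃_Δ is differentiable at (ε, 0) with gradient (1 + Δ², 1 + Δ²)
    (∀ ε : ℝ, 0 < ε → ∀ Δ ∈ Ioo (0:ℝ) 1,
      HasGradientAt (ft11 Δ)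
        ((EuclideanSpace.equiv (Fin 2) ℝ).symm ![1 + Δ ^ 2, 1 + Δ ^ 2])
        ((EuclideanSpace.equiv (Fin 2) ℝ).symm ![ε, 0])) ∧
    -- (iii) ∂f(ε,0) = {v : v₁ = 1, v₂ ∈ [−1,1]}, so (1,−1) ∈ ∂f(ε,0)
    (∀ ε : ℝ, 0 < ε →
      rSubdiff11 f11 ((EuclideanSpace.equiv (Fin 2) ℝ).symm ![ε, 0]) =
        {v | v 0 = 1 ∧ v 1 ∈ Icc (-1:ℝ) 1} ∧
      (EuclideanSpace.equiv (Fin 2) ℝ).symm ![1, -1] ∈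
        rSubdiff11 f11 ((EuclideanSpace.equiv (Fin 2) ℝ).symm ![ε, 0])) ∧
    -- (iv) the distance from (1,−1) to (1 + Δ², 1 + Δ²) is at least 2
    (∀ Δ ∈ Ioo (0:ℝ) 1,
      2 ≤ dist ((EuclideanSpace.equiv (Fin 2) ℝ).symm ![1, -1])
        ((EuclideanSpace.equiv (Fin 2) ℝ).symm ![1 + Δ ^ 2, 1 + Δ ^ 2])) ∧
    ¬ Tendsto (fun Δ : ℝ =>
        dist ((EuclideanSpace.equiv (Fin 2) ℝ).symm ![1, -1])
          ((EuclideanSpace.equiv (Fin 2) ℝ).symm ![1 + Δ ^ 2, 1 + Δ ^ 2]))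
      (nhdsWithin 0 (Ioo (0:ℝ) 1)) (nhds 0) := by
  -- useful rewritings of the component functions
  have hF0 : F11 0 = fun y : E2 => 1 * y 0 + 0 * y 1 := by
    funext y; simp [F11]
  have hF1 : F11 1 = fun y : E2 => 0 * y 0 + 1 * y 1 := by
    funext y; simp [F11]
  have hFt0 : ∀ Δ : ℝ, Ft11 Δ 0 = fun y : E2 => 1 * y 0 + Δ ^ 2 * y 1 := by
    intro Δ; funext y; simp [Ft11]
  have hFt1 : ∀ Δ : ℝ, Ft11 Δ 1 = fun y : E2 => Δ ^ 2 * y 0 + 1 * y 1 := by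
    intro Δ; funext y; simp [Ft11]; ring
  have hdist : ∀ Δ : ℝ, dist ((EuclideanSpace.equiv (Fin 2) ℝ).symm ![(1:ℝ), -1])
      ((EuclideanSpace.equiv (Fin 2) ℝ).symm ![1 + Δ ^ 2, 1 + Δ ^ 2])
      = Real.sqrt ((Δ ^ 2) ^ 2 + (2 + Δ ^ 2) ^ 2) := by
    intro Δ
    rw [EuclideanSpace.dist_eq]
    congr 1
    simp [Fin.sum_univ_two, esa11, Real.dist_eq, sq_abs]
    ring_nf
  refine ⟨⟨?_, ?_, ?_⟩, ?_, ?_, ?_, ?_⟩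
  · -- ContDiff of F11
    intro i
    fin_cases i
    · show ContDiff ℝ 1 (F11 0); rw [hF0]; exact contDiffLin11 1 0
    · show ContDiff ℝ 1 (F11 1); rw [hF1]; exact contDiffLin11 0 1
  · -- fully linear bounds
    rintro Δ ⟨hΔ0, hΔ1⟩
    constructor
    · intro i
      fin_cases i
      · show ContDiff ℝ 1 (Ft11 Δ 0); rw [hFt0]; exact contDiffLin11 1 (Δ ^ 2)
      · show ContDiff ℝ 1 (Ft11 Δ 1); rw [hFt1]; exact contDiffLin11 (Δ ^ 2) 1
    · intro i y hy
      rw [mem_ball_zero_iff] at hy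
      have hy0 : |y 0| ≤ ‖y‖ := abs_apply_le_norm11 y 0
      have hy1 : |y 1| ≤ ‖y‖ := abs_apply_le_norm11 y 1
      have hΔ2 : Δ ^ 2 ≤ Δ := by nlinarith
      fin_cases i
      · constructor
        · show |F11 0 y - Ft11 Δ 0 y| ≤ 1 * Δ ^ 2
          have : |F11 0 y - Ft11 Δ 0 y| = Δ ^ 2 * |y 1| := by
            simp [F11, Ft11, abs_mul, abs_of_nonneg (sq_nonneg Δ)]
          rw [this, one_mul]
          nlinarith [abs_nonneg (y 1)]
        · show ‖gradient (F11 0) y - gradient (Ft11 Δ 0) y‖ ≤ 1 * Δ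
          rw [hF0, hFt0, gradLin11, gradLin11, sub_symm11]
          rw [norm_symm11]
          have : Real.sqrt ((1 - 1) ^ 2 + (0 - Δ ^ 2) ^ 2) = Δ ^ 2 := by
            rw [show ((1:ℝ) - 1) ^ 2 + (0 - Δ ^ 2) ^ 2 = (Δ ^ 2) ^ 2 by ring,
              Real.sqrt_sq (sq_nonneg Δ)]
          rw [this]; linarith
      · constructor
        · show |F11 1 y - Ft11 Δ 1 y| ≤ 1 * Δ ^ 2
          have : |F11 1 y - Ft11 Δ 1 y| = Δ ^ 2 * |y 0| := by
            simp [F11, Ft11, abs_mul, abs_of_nonneg (sq_nonneg Δ)]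
          rw [this, one_mul]
          nlinarith [abs_nonneg (y 0)]
        · show ‖gradient (F11 1) y - gradient (Ft11 Δ 1) y‖ ≤ 1 * Δ
          rw [hF1, hFt1, gradLin11, gradLin11, sub_symm11]
          rw [norm_symm11]
          have : Real.sqrt ((0 - Δ ^ 2) ^ 2 + (1 - 1) ^ 2) = Δ ^ 2 := by
            rw [show ((0:ℝ) - Δ ^ 2) ^ 2 + (1 - 1) ^ 2 = (Δ ^ 2) ^ 2 by ring,
              Real.sqrt_sq (sq_nonneg Δ)]
          rw [this]; linarith
  · -- agreement at the centre
    rintro Δ - i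
    fin_cases i <;> simp [Ft11, F11]
  · -- (ii) gradient of the model objective at (ε, 0)
    rintro ε hε Δ ⟨hΔ0, hΔ1⟩
    set p : E2 := (EuclideanSpace.equiv (Fin 2) ℝ).symm ![ε, 0] with hp
    have hU : {x : E2 | 0 < x 0 + Δ ^ 2 * x 1 ∧ 0 < x 1 + Δ ^ 2 * x 0} ∈ nhds p := by
      have hopen : IsOpen {x : E2 | 0 < x 0 + Δ ^ 2 * x 1 ∧ 0 < x 1 + Δ ^ 2 * x 0} := by
        apply IsOpen.inter
        · exact isOpen_lt continuous_const
            (((EuclideanSpace.proj (𝕜 := ℝ) (0 : Fin 2)).continuous).add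
              (continuous_const.mul (EuclideanSpace.proj (𝕜 := ℝ) (1 : Fin 2)).continuous))
        · exact isOpen_lt continuous_const
            (((EuclideanSpace.proj (𝕜 := ℝ) (1 : Fin 2)).continuous).add
              (continuous_const.mul (EuclideanSpace.proj (𝕜 := ℝ) (0 : Fin 2)).continuous))
      apply hopen.mem_nhds
      constructor
      · show (0:ℝ) < p 0 + Δ ^ 2 * p 1
        simp [hp, esa11]; linarith
      · show (0:ℝ) < p 1 + Δ ^ 2 * p 0
        simp [hp, esa11]; positivity
    have heq : ft11 Δ =ᶠ[nhds p]
        (fun y : E2 => (1 + Δ ^ 2) * y 0 + (1 + Δ ^ 2) * y 1) := by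
      filter_upwards [hU] with x hx
      rcases hx with ⟨h1, h2⟩
      rw [ft11, abs_of_pos h1, abs_of_pos h2]; ring
    have hg := hasGradLin11 (1 + Δ ^ 2) (1 + Δ ^ 2) p
    rw [hasGradientAt_iff_hasFDerivAt] at hg ⊢
    exact hg.congr_of_eventuallyEq heq
  · -- (iii) subdifferential of f at (ε, 0)
    intro ε hε
    have hmem : ∀ v : E2, v ∈ rSubdiff11 f11 ((EuclideanSpace.equiv (Fin 2) ℝ).symm ![ε, 0]) ↔
        ∀ x : E2, ε + (v 0 * (x 0 - ε) + v 1 * x 1) ≤ |x 0| + |x 1| := by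
      intro v
      simp only [rSubdiff11, mem_setOf_eq, f11, PiLp.inner_apply, RCLike.inner_apply,
        conj_trivial, Fin.sum_univ_two]
      constructor
      · intro h x
        have := h x
        simpa [esa11, abs_of_pos hε, mul_comm] using this
      · intro h x
        have := h x
        simpa [esa11, abs_of_pos hε, mul_comm] using this
    constructor
    · ext v
      rw [hmem]
      simp only [mem_setOf_eq, mem_Icc]
      constructor
      · intro h
        have h1 := h ((EuclideanSpace.equiv (Fin 2) ℝ).symm ![ε + 1, 0])
        have h2 := h ((EuclideanSpace.equiv (Fin 2) ℝ).symm ![ε / 2, 0])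
        have h3 := h ((EuclideanSpace.equiv (Fin 2) ℝ).symm ![ε, 1])
        have h4 := h ((EuclideanSpace.equiv (Fin 2) ℝ).symm ![ε, -1])
        simp only [esa11] at h1 h2 h3 h4
        rw [Matrix.cons_val_zero, Matrix.cons_val_one] at h1 h2 h3 h4
        simp only [Matrix.cons_val_zero] at h1 h2 h3 h4
        rw [abs_of_pos (by linarith : (0:ℝ) < ε + 1)] at h1
        rw [abs_of_pos (by linarith : (0:ℝ) < ε / 2)] at h2
        rw [abs_of_pos hε] at h3 h4
        norm_num at h1 h2 h3 h4
        refine ⟨by nlinarith, by nlinarith, by nlinarith⟩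
      · rintro ⟨h0, hl, hr⟩ x
        rw [h0]
        have a0 : x 0 ≤ |x 0| := le_abs_self _
        have a1 : |x 1| = |x 1| := rfl
        have b1 : v 1 * x 1 ≤ |x 1| := by
          rcases le_or_gt 0 (x 1) with hx | hx
          · rw [abs_of_nonneg hx]; nlinarith
          · rw [abs_of_neg hx]; nlinarith
        nlinarith
    · rw [hmem]
      intro x
      simp only [esa11]
      rw [Matrix.cons_val_zero, Matrix.cons_val_one, Matrix.cons_val_zero]
      have a0 : x 0 ≤ |x 0| := le_abs_self _
      have b1 : -x 1 ≤ |x 1| := neg_le_abs _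
      linarith
  · -- (iv) distance bound
    rintro Δ ⟨hΔ0, hΔ1⟩
    rw [hdist]
    have h4 : (4:ℝ) ≤ (Δ ^ 2) ^ 2 + (2 + Δ ^ 2) ^ 2 := by nlinarith
    calc (2:ℝ) = Real.sqrt 4 := by
          rw [show (4:ℝ) = 2 ^ 2 by norm_num, Real.sqrt_sq (by norm_num : (0:ℝ) ≤ 2)]
      _ ≤ _ := Real.sqrt_le_sqrt h4
  · -- non-convergence
    intro h
    have hne : (nhdsWithin (0:ℝ) (Ioo 0 1)).NeBot := by
      rw [← mem_closure_iff_nhdsWithin_neBot, closure_Ioo (by norm_num : (0:ℝ) ≠ 1)]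
      exact ⟨le_refl 0, by norm_num⟩
    have h1 : ∀ᶠ Δ : ℝ in nhdsWithin 0 (Ioo 0 1),
        dist ((EuclideanSpace.equiv (Fin 2) ℝ).symm ![(1:ℝ), -1])
          ((EuclideanSpace.equiv (Fin 2) ℝ).symm ![1 + Δ ^ 2, 1 + Δ ^ 2]) < 2 :=
      h (Iio_mem_nhds (by norm_num : (0:ℝ) < 2))
    have h2 : ∀ᶠ Δ : ℝ in nhdsWithin 0 (Ioo 0 1), Δ ∈ Ioo (0:ℝ) 1 :=
      self_mem_nhdsWithin
    obtain ⟨Δ, hlt, hΔmem⟩ := (h1.and h2).exists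
    rcases hΔmem with ⟨hΔ0, hΔ1⟩
    rw [hdist] at hlt
    have h4 : (4:ℝ) ≤ (Δ ^ 2) ^ 2 + (2 + Δ ^ 2) ^ 2 := by nlinarith
    have : (2:ℝ) ≤ Real.sqrt ((Δ ^ 2) ^ 2 + (2 + Δ ^ 2) ^ 2) := by
      calc (2:ℝ) = Real.sqrt 4 := by
            rw [show (4:ℝ) = 2 ^ 2 by norm_num, Real.sqrt_sq (by norm_num : (0:ℝ) ≤ 2)]
        _ ≤ _ := Real.sqrt_le_sqrt h4
    linarith
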